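/- For each β < 1, the σ-finite measure F on ℝ with density |x|^{-β} with respect to Lebesgue measure is zero-stable: for any two linear functionals f₁(x₁,x₂) = a₁x₁ + a₂x₂ and f₂(x₁,x₂) = b₁x₁ + b₂x₂ with a₁a₂b₁b₂ ≠ 0 and |a₁a₂| = |b₁b₂|, there exists a transformation L: ℝ² → ℝ² preserving F × F such that f₂ = f₁ ∘ L. In particular the Lebesgue measure on ℝ (β = 0) is zero-stable. -/

import Mathlib

open MeasureTheory Real Set

lemma map_mul_withDensity_abs_rpow (β : ℝ) {c : ℝ} (hc : c ≠ 0) :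
    (volume.withDensity fun x => ENNReal.ofReal (|x| ^ (-β))).map (fun x => c * x)
      = ENNReal.ofReal (|c| ^ (β - 1)) •
        volume.withDensity (fun x => ENNReal.ofReal (|x| ^ (-β))) := by
  have hcpos : (0:ℝ) < |c| := abs_pos.mpr hc
  ext s hs
  rw [Measure.map_apply (measurable_const_mul c) hs,
    withDensity_apply _ (hs.preimage (measurable_const_mul c)),
    Measure.smul_apply, withDensity_apply _ hs, smul_eq_mul]
  calc ∫⁻ x in (fun x => c * x) ⁻¹' s, ENNReal.ofReal (|x| ^ (-β))
      = ∫⁻ x in (fun x => c * x) ⁻¹' s, ENNReal.ofReal (|c⁻¹ * (c * x)| ^ (-β)) := by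
        refine lintegral_congr fun x => ?_
        rw [inv_mul_cancel_left₀ hc]
    _ = ∫⁻ y in s, ENNReal.ofReal (|c⁻¹ * y| ^ (-β)) ∂(volume.map (fun x => c * x)) := by
        rw [setLIntegral_map hs (((measurable_const_mul _).abs.pow_const _).ennreal_ofReal)
          (measurable_const_mul c)]
    _ = ENNReal.ofReal |c⁻¹| *
          ∫⁻ y in s, ENNReal.ofReal (|c⁻¹ * y| ^ (-β)) ∂volume := by
        rw [Real.map_volume_mul_left hc, Measure.restrict_smul, lintegral_smul_measure, smul_eq_mul]
    _ = ENNReal.ofReal |c⁻¹| * (ENNReal.ofReal (|c| ^ β) *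
          ∫⁻ y in s, ENNReal.ofReal (|y| ^ (-β)) ∂volume) := by
        rw [← lintegral_const_mul _ ((measurable_abs.pow_const _).ennreal_ofReal)]
        congr 1
        refine lintegral_congr fun y => ?_
        rw [abs_mul, abs_inv, Real.mul_rpow (by positivity) (abs_nonneg _),
          ENNReal.ofReal_mul (by positivity)]
        congr 2
        rw [← Real.rpow_neg_one |c|, ← Real.rpow_mul hcpos.le]
        norm_num
    _ = ENNReal.ofReal (|c| ^ (β - 1)) * ∫⁻ x in s, ENNReal.ofReal (|x| ^ (-β)) := by
        rw [← mul_assoc, ← ENNReal.ofReal_mul (by positivity), abs_inv,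
          ← Real.rpow_neg_one |c|, ← Real.rpow_add hcpos]
        ring_nf

/-- For `β < 1`, the σ-finite measure on `ℝ` with density `|x|^{-β}` is zero-stable:
for any two linear functionals `f₁(x) = a₁x₁ + a₂x₂`, `f₂(x) = b₁x₁ + b₂x₂` with
nonzero coefficients and equal quasi-norms `|a₁a₂| = |b₁b₂|`, there is a transformation
`L : ℝ × ℝ → ℝ × ℝ` preserving `F × F` with `f₂ = f₁ ∘ L`. -/
theorem zero_stability_of_power_density {β : ℝ} (hβ : β < 1) :
    let F : Measure ℝ := volume.withDensity (fun x => ENNReal.ofReal (|x| ^ (-β)))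
    ∀ a₁ a₂ b₁ b₂ : ℝ, a₁ * a₂ * b₁ * b₂ ≠ 0 → |a₁ * a₂| = |b₁ * b₂| →
      ∃ L : ℝ × ℝ → ℝ × ℝ, MeasurePreserving L (F.prod F) (F.prod F) ∧
        ∀ p : ℝ × ℝ, b₁ * p.1 + b₂ * p.2 = a₁ * (L p).1 + a₂ * (L p).2 := by
  intro F a₁ a₂ b₁ b₂ hne habs
  have ha₁ : a₁ ≠ 0 := fun h => hne (by simp [h])
  have ha₂ : a₂ ≠ 0 := fun h => hne (by simp [h])
  have hb₁ : b₁ ≠ 0 := fun h => hne (by simp [h])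
  have hb₂ : b₂ ≠ 0 := fun h => hne (by simp [h])
  set c₁ : ℝ := b₁ / a₁ with hc₁def
  set c₂ : ℝ := b₂ / a₂ with hc₂def
  have hc₁ : c₁ ≠ 0 := div_ne_zero hb₁ ha₁
  have hc₂ : c₂ ≠ 0 := div_ne_zero hb₂ ha₂
  have hprod : |c₁| * |c₂| = 1 := by
    rw [← abs_mul]
    have : c₁ * c₂ = (b₁ * b₂) / (a₁ * a₂) := div_mul_div_comm b₁ a₁ b₂ a₂
    rw [this, abs_div, ← habs, div_self (by simp [abs_ne_zero, mul_ne_zero ha₁ ha₂, ha₁, ha₂])]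
  refine ⟨fun p => (c₁ * p.1, c₂ * p.2), ⟨?_, ?_⟩, fun p => ?_⟩
  · exact ((measurable_const_mul c₁).comp measurable_fst).prodMk
      ((measurable_const_mul c₂).comp measurable_snd)
  · have hmap : (F.prod F).map (Prod.map (fun x => c₁ * x) (fun x => c₂ * x))
        = (F.map (fun x => c₁ * x)).prod (F.map (fun x => c₂ * x)) :=
      (Measure.map_prod_map _ _ (measurable_const_mul c₁) (measurable_const_mul c₂)).symm
    have h1 := map_mul_withDensity_abs_rpow β hc₁
    have h2 := map_mul_withDensity_abs_rpow β hc₂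
    have heq : (ENNReal.ofReal (|c₁| ^ (β - 1)) • F).prod
        (ENNReal.ofReal (|c₂| ^ (β - 1)) • F) = F.prod F := by
      refine (Measure.prod_eq fun s t hs ht => ?_).symm
      rw [Measure.prod_prod, Measure.smul_apply, Measure.smul_apply, smul_eq_mul, smul_eq_mul]
      have : ENNReal.ofReal (|c₁| ^ (β - 1)) * ENNReal.ofReal (|c₂| ^ (β - 1)) = 1 := by
        rw [← ENNReal.ofReal_mul (by positivity),
          ← Real.mul_rpow (abs_nonneg _) (abs_nonneg _), hprod, Real.one_rpow,
          ENNReal.ofReal_one]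
      calc ENNReal.ofReal (|c₁| ^ (β - 1)) * F s * (ENNReal.ofReal (|c₂| ^ (β - 1)) * F t)
          = ENNReal.ofReal (|c₁| ^ (β - 1)) * ENNReal.ofReal (|c₂| ^ (β - 1)) * (F s * F t) := by
            ring
        _ = F s * F t := by rw [this, one_mul]
    have : (fun p : ℝ × ℝ => (c₁ * p.1, c₂ * p.2))
        = Prod.map (fun x => c₁ * x) (fun x => c₂ * x) := rfl
    rw [this, hmap, h1, h2, heq]
  · simp only
    rw [hc₁def, hc₂def]
    field_simp
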